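/- (Corollary 8, part 𝒰 ⊆ 𝒱*) Let 𝒞 be a nonempty compact set of cost matrices and let 𝒱* be the unique nonempty compact set with F_𝒞(𝒱*) = 𝒱*. If C ∈ 𝒞 and V ∈ ℝ^S satisfies f_C(V) = V, then V ∈ 𝒱*. -/
import Mathlib


open Metric

/-- The Bellman operator for a discounted MDP with transition kernel `P`,
discount factor `γ` and cost matrix `C`. -/
noncomputable def bellman (S A : ℕ) (P : Fin S → Fin S → Fin A → ℝ) (γ : ℝ)
    (C : Fin S → Fin A → ℝ) (V : Fin S → ℝ) : Fin S → ℝ :=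
  fun s => ⨅ a : Fin A, (C s a + γ * ∑ s' : Fin S, P s' s a * V s')

/-- The set-based Bellman operator associated with a set `𝒞` of cost matrices. -/
noncomputable def setBellman (S A : ℕ) (P : Fin S → Fin S → Fin A → ℝ) (γ : ℝ)
    (𝒞 : Set (Fin S → Fin A → ℝ)) (𝒱 : Set (Fin S → ℝ)) : Set (Fin S → ℝ) :=
  closure (⋃ C ∈ 𝒞, ⋃ V ∈ 𝒱, {bellman S A P γ C V})

lemma bellman_contract (S A : ℕ) (hA : 0 < A) (P : Fin S → Fin S → Fin A → ℝ)
    (hP0 : ∀ s' s a, 0 ≤ P s' s a) (hP1 : ∀ s a, ∑ s' : Fin S, P s' s a = 1)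
    (γ : ℝ) (hγ0 : 0 ≤ γ) (C : Fin S → Fin A → ℝ) (W W' : Fin S → ℝ) :
    dist (bellman S A P γ C W) (bellman S A P γ C W') ≤ γ * dist W W' := by
  have hANE : Nonempty (Fin A) := ⟨⟨0, hA⟩⟩
  rw [dist_pi_le_iff (by positivity)]
  intro s
  set x := fun a : Fin A => C s a + γ * ∑ s', P s' s a * W s' with hxdef
  set y := fun a : Fin A => C s a + γ * ∑ s', P s' s a * W' s' with hydef
  have key : ∀ a, |x a - y a| ≤ γ * dist W W' := by
    intro a
    have hxy : x a - y a = γ * ∑ s', P s' s a * (W s' - W' s') := by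
      simp only [hxdef, hydef, Finset.mul_sum, mul_sub]
      rw [Finset.sum_sub_distrib]
      ring
    rw [hxy, abs_mul, abs_of_nonneg hγ0]
    gcongr
    calc |∑ s', P s' s a * (W s' - W' s')| ≤ ∑ s', |P s' s a * (W s' - W' s')| :=
        Finset.abs_sum_le_sum_abs _ _
      _ ≤ ∑ s', P s' s a * dist W W' := by
        apply Finset.sum_le_sum; intro s' _
        rw [abs_mul, abs_of_nonneg (hP0 s' s a)]
        have h := dist_le_pi_dist W W' s'
        rw [Real.dist_eq] at h
        exact mul_le_mul_of_nonneg_left h (hP0 s' s a)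
      _ = dist W W' := by rw [← Finset.sum_mul, hP1, one_mul]
  have hbx : BddBelow (Set.range x) := (Set.finite_range x).bddBelow
  have hby : BddBelow (Set.range y) := (Set.finite_range y).bddBelow
  show dist (⨅ a, x a) (⨅ a, y a) ≤ γ * dist W W'
  rw [Real.dist_eq, abs_sub_le_iff]
  constructor
  · have h : (⨅ a, x a) - γ * dist W W' ≤ ⨅ a, y a := le_ciInf fun a => by
      have h1 := ciInf_le hbx a
      have h2 := (abs_le.mp (key a)).2
      linarith
    linarith
  · have h : (⨅ a, y a) - γ * dist W W' ≤ ⨅ a, x a := le_ciInf fun a => by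
      have h1 := ciInf_le hby a
      have h2 := (abs_le.mp (key a)).1
      linarith
    linarith
theorem fixed_point_mem_fixed_point_set (S A : ℕ) (hS : 0 < S) (hA : 0 < A)
    (P : Fin S → Fin S → Fin A → ℝ)
    (hP0 : ∀ s' s a, 0 ≤ P s' s a)
    (hP1 : ∀ s a, ∑ s' : Fin S, P s' s a = 1)
    (γ : ℝ) (hγ : γ ∈ Set.Ioo (0 : ℝ) 1)
    (𝒞 : Set (Fin S → Fin A → ℝ)) (h𝒞ne : 𝒞.Nonempty) (h𝒞c : IsCompact 𝒞)
    (Vstar : Set (Fin S → ℝ)) (hVne : Vstar.Nonempty) (hVc : IsCompact Vstar)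
    (hVfix : setBellman S A P γ 𝒞 Vstar = Vstar)
    (C : Fin S → Fin A → ℝ) (hC : C ∈ 𝒞)
    (V : Fin S → ℝ) (hV : bellman S A P γ C V = V) :
    V ∈ Vstar := by

  have hγ0 : 0 ≤ γ := le_of_lt hγ.1
  obtain ⟨W0, hW0⟩ := hVne
  let g : ℕ → (Fin S → ℝ) := fun n => (bellman S A P γ C)^[n] W0
  have hmem : ∀ n, g n ∈ Vstar := by
    intro n
    induction n with
    | zero => exact hW0
    | succ n ih =>
      have : g (n+1) = bellman S A P γ C (g n) := Function.iterate_succ_apply' _ _ _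
      rw [this, ← hVfix]
      exact subset_closure (Set.mem_biUnion hC (Set.mem_biUnion ih rfl))
  have hdist : ∀ n, dist (g n) V ≤ γ ^ n * dist W0 V := by
    intro n
    induction n with
    | zero => simp [g]
    | succ n ih =>
      have h1 : g (n+1) = bellman S A P γ C (g n) := Function.iterate_succ_apply' _ _ _
      calc dist (g (n+1)) V = dist (bellman S A P γ C (g n)) (bellman S A P γ C V) := by
            rw [h1, hV]
        _ ≤ γ * dist (g n) V := bellman_contract S A hA P hP0 hP1 γ hγ0 C _ _
        _ ≤ γ * (γ ^ n * dist W0 V) := by gcongr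
        _ = γ ^ (n+1) * dist W0 V := by ring
  have htend : Filter.Tendsto g Filter.atTop (nhds V) := by
    rw [tendsto_iff_dist_tendsto_zero]
    apply squeeze_zero (fun n => dist_nonneg) hdist
    have : Filter.Tendsto (fun n => γ ^ n) Filter.atTop (nhds 0) :=
      tendsto_pow_atTop_nhds_zero_of_lt_one hγ0 hγ.2
    simpa using this.mul_const (dist W0 V)
  have := hVc.isClosed
  exact this.mem_of_tendsto htend (Filter.Eventually.of_forall hmem)
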